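/- A function f : [a,b] → M into a complete metric space is regulated (left limits exist at each point of (a,b] and right limits at each point of [a,b)) if and only if V_ε(f,[a,b]) < ∞ for every ε > 0. -/
import Mathlib


open Filter Set
open scoped ENNReal Topology

/-- The approximate (ε-)variation: infimum of Jordan variations of functions of
bounded variation uniformly ε-close to `f` on `T` (⊤ if no such function). -/
noncomputable def approxVar {M : Type*} [MetricSpace M] (f : ℝ → M) (T : Set ℝ) (ε : ℝ) : ℝ≥0∞ :=
  ⨅ (g : ℝ → M) (_ : eVariationOn g T ≠ ⊤ ∧ ∀ t ∈ T, dist (f t) (g t) ≤ ε),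
    eVariationOn g T

/-- The oscillation (diameter of the image) of `f` on `T`, valued in `[0,∞]`. -/
noncomputable def oscOn {M : Type*} [MetricSpace M] (f : ℝ → M) (T : Set ℝ) : ℝ≥0∞ :=
  ⨆ s ∈ T, ⨆ t ∈ T, edist (f s) (f t)

lemma step_sum {M : Type*} [MetricSpace M] {P : ℝ → Prop} [DecidablePred P]
    (hP : ∀ ⦃x y : ℝ⦄, x ≤ y → P y → P x) (c1 c2 : M) {u : ℕ → ℝ} (hu : Monotone u) (n : ℕ) :
    ∑ i ∈ Finset.range n, edist ((fun x => if P x then c1 else c2) (u (i + 1)))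
      ((fun x => if P x then c1 else c2) (u i))
      = edist ((fun x => if P x then c1 else c2) (u n))
        ((fun x => if P x then c1 else c2) (u 0)) := by
  induction n with
  | zero => simp
  | succ n ih =>
    rw [Finset.sum_range_succ, ih]
    by_cases h : P (u n)
    · have h0 : P (u 0) := hP (hu (Nat.zero_le n)) h
      simp [h, h0]
    · have h1 : ¬ P (u (n + 1)) := fun hp => h (hP (hu (Nat.le_succ n)) hp)
      simp [h, h1]

lemma evar_step {M : Type*} [MetricSpace M] {P : ℝ → Prop} [DecidablePred P]
    (hP : ∀ ⦃x y : ℝ⦄, x ≤ y → P y → P x) (c1 c2 : M) (s : Set ℝ) :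
    eVariationOn (fun x => if P x then c1 else c2) s ≤ edist c1 c2 := by
  refine iSup_le ?_
  rintro ⟨n, u, hu, -⟩
  rw [step_sum hP c1 c2 hu n]
  beta_reduce
  split_ifs <;> simp [edist_comm]

lemma regulated_exists_bv_approx {M : Type*} [MetricSpace M] {a b : ℝ} (hab : a < b) (f : ℝ → M)
    (hl : ∀ τ ∈ Set.Ioc a b, ∃ L : M, Tendsto f (𝓝[Set.Ico a τ] τ) (𝓝 L))
    (hr : ∀ τ ∈ Set.Ico a b, ∃ L : M, Tendsto f (𝓝[Set.Ioc τ b] τ) (𝓝 L))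
    {ε : ℝ} (hε : 0 < ε) :
    ∃ g : ℝ → M, eVariationOn g (Set.Icc a b) ≠ ⊤ ∧ ∀ t ∈ Set.Icc a b, dist (f t) (g t) ≤ ε := by
  classical
  set S : Set ℝ := {t | t ∈ Icc a b ∧ ∃ g : ℝ → M, eVariationOn g (Icc a t) ≠ ⊤ ∧
      ∀ x ∈ Icc a t, dist (f x) (g x) ≤ ε} with hS
  have haS : a ∈ S := by
    refine ⟨⟨le_refl a, hab.le⟩, fun _ => f a, ?_, ?_⟩
    · rw [Icc_self]
      rw [eVariationOn.subsingleton _ (Set.subsingleton_singleton)]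
      exact ENNReal.zero_ne_top
    · intro x hx
      rw [Icc_self, mem_singleton_iff] at hx
      simp [hx, hε.le]
  have hSne : S.Nonempty := ⟨a, haS⟩
  have hbdd : BddAbove S := ⟨b, fun t ht => ht.1.2⟩
  set c := sSup S with hc
  have hac : a ≤ c := le_csSup hbdd haS
  have hcb : c ≤ b := csSup_le hSne fun t ht => ht.1.2
  have hcmem : c ∈ S := by
    rcases eq_or_lt_of_le hac with h | h
    · rwa [← h]
    · -- a < c : use left limit at c
      obtain ⟨L, hL⟩ := hl c ⟨h, hcb⟩
      have hev : ∀ᶠ x in 𝓝[Ico a c] c, dist (f x) L ≤ ε :=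
        hL (eventually_of_mem (Metric.closedBall_mem_nhds L hε) fun y hy => hy)
      rw [Filter.eventually_iff, Metric.mem_nhdsWithin_iff] at hev
      obtain ⟨r, hr0, hball⟩ := hev
      obtain ⟨t, htS, htr⟩ := exists_lt_of_lt_csSup hSne (show c - r < c by linarith)
      have htc : t ≤ c := le_csSup hbdd htS
      rcases eq_or_lt_of_le htc with rfl | htc
      · exact htS
      obtain ⟨g0, hg0v, hg0a⟩ := htS.2
      have hat : a ≤ t := htS.1.1
      set m' := (t + c) / 2 with hm'
      have htm' : t < m' := by simp only [hm']; linarith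
      have hm'c : m' < c := by simp only [hm']; linarith
      set G : ℝ → M := fun x => if x ≤ t then g0 x else if x < c then L else f c with hG
      have happrox : ∀ x ∈ Icc a c, dist (f x) (G x) ≤ ε := by
        intro x hx
        by_cases h1 : x ≤ t
        · simpa [hG, h1] using hg0a x ⟨hx.1, h1⟩
        · push_neg at h1
          by_cases h2 : x < c
          · have : x ∈ Metric.ball c r ∩ Ico a c := by
              refine ⟨?_, hx.1, h2⟩
              rw [Metric.mem_ball, Real.dist_eq, abs_lt]
              constructor <;> linarith
            simpa [hG, h1.not_ge, h2] using hball this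
          · push_neg at h2
            have : x = c := le_antisymm hx.2 h2
            simp [hG, this, htc.not_ge, hε.le]
      refine ⟨⟨hac, hcb⟩, G, ?_, happrox⟩
      have hsplit1 : Icc a c = Icc a t ∪ Icc t c := (Icc_union_Icc_eq_Icc hat htc.le).symm
      have hsplit2 : Icc t c = Icc t m' ∪ Icc m' c := (Icc_union_Icc_eq_Icc htm'.le hm'c.le).symm
      have hu1 : eVariationOn G (Icc a c) = eVariationOn G (Icc a t) + eVariationOn G (Icc t c) := by
        rw [hsplit1]
        exact eVariationOn.union G ⟨⟨hat, le_rfl⟩, fun y hy => hy.2⟩ ⟨⟨le_rfl, htc.le⟩, fun y hy => hy.1⟩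
      have hu2 : eVariationOn G (Icc t c) = eVariationOn G (Icc t m') + eVariationOn G (Icc m' c) := by
        rw [hsplit2]
        exact eVariationOn.union G ⟨⟨htm'.le, le_rfl⟩, fun y hy => hy.2⟩
          ⟨⟨le_rfl, hm'c.le⟩, fun y hy => hy.1⟩
      have hp1 : eVariationOn G (Icc a t) ≠ ⊤ := by
        rw [eVariationOn.eq_of_eqOn (fun x hx => by simp [hG, hx.2] : EqOn G g0 (Icc a t))]
        exact hg0v
      have hp2 : eVariationOn G (Icc t m') ≠ ⊤ := by
        have heq : EqOn G (fun x => if x ≤ t then g0 t else L) (Icc t m') := by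
          intro x hx
          by_cases h1 : x ≤ t
          · have : x = t := le_antisymm h1 hx.1
            simp [hG, h1, this]
          · have : x < c := lt_of_le_of_lt hx.2 hm'c
            simp [hG, h1, this]
        rw [eVariationOn.eq_of_eqOn heq]
        exact ne_top_of_le_ne_top (edist_ne_top _ _)
          (evar_step (fun x y hxy hy => le_trans hxy hy) (g0 t) L (Icc t m'))
      have hp3 : eVariationOn G (Icc m' c) ≠ ⊤ := by
        have heq : EqOn G (fun x => if x < c then L else f c) (Icc m' c) := by
          intro x hx
          have h1 : ¬ x ≤ t := not_le.mpr (lt_of_lt_of_le htm' hx.1)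
          simp [hG, h1]
        rw [eVariationOn.eq_of_eqOn heq]
        exact ne_top_of_le_ne_top (edist_ne_top _ _)
          (evar_step (fun x y hxy hy => lt_of_le_of_lt hxy hy) L (f c) (Icc m' c))
      rw [hu1, hu2]
      exact ENNReal.add_ne_top.mpr ⟨hp1, ENNReal.add_ne_top.mpr ⟨hp2, hp3⟩⟩
  -- now show c = b
  have hcb' : c = b := by
    by_contra hne
    have hclt : c < b := lt_of_le_of_ne hcb hne
    obtain ⟨L', hL'⟩ := hr c ⟨hac, hclt⟩
    have hev : ∀ᶠ x in 𝓝[Ioc c b] c, dist (f x) L' ≤ ε :=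
      hL' (eventually_of_mem (Metric.closedBall_mem_nhds L' hε) fun y hy => hy)
    rw [Filter.eventually_iff, Metric.mem_nhdsWithin_iff] at hev
    obtain ⟨r, hr0, hball⟩ := hev
    obtain ⟨gc, hgcv, hgca⟩ := hcmem.2
    set t' := min (c + r / 2) b with ht'
    have hct' : c < t' := lt_min (by linarith) hclt
    have ht'b : t' ≤ b := min_le_right _ _
    set G : ℝ → M := fun x => if x ≤ c then gc x else L' with hG
    have ht'S : t' ∈ S := by
      refine ⟨⟨hac.trans hct'.le, ht'b⟩, G, ?_, ?_⟩
      · have hsplit : Icc a t' = Icc a c ∪ Icc c t' := (Icc_union_Icc_eq_Icc hac hct'.le).symm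
        have hu1 : eVariationOn G (Icc a t')
            = eVariationOn G (Icc a c) + eVariationOn G (Icc c t') := by
          rw [hsplit]
          exact eVariationOn.union G ⟨⟨hac, le_rfl⟩, fun y hy => hy.2⟩
            ⟨⟨le_rfl, hct'.le⟩, fun y hy => hy.1⟩
        have hp1 : eVariationOn G (Icc a c) ≠ ⊤ := by
          rw [eVariationOn.eq_of_eqOn (fun x hx => by simp [hG, hx.2] : EqOn G gc (Icc a c))]
          exact hgcv
        have hp2 : eVariationOn G (Icc c t') ≠ ⊤ := by
          have heq : EqOn G (fun x => if x ≤ c then gc c else L') (Icc c t') := by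
            intro x hx
            by_cases h1 : x ≤ c
            · have : x = c := le_antisymm h1 hx.1
              simp [hG, h1, this]
            · simp [hG, h1]
          rw [eVariationOn.eq_of_eqOn heq]
          exact ne_top_of_le_ne_top (edist_ne_top _ _)
            (evar_step (fun x y hxy hy => le_trans hxy hy) (gc c) L' (Icc c t'))
        rw [hu1]
        exact ENNReal.add_ne_top.mpr ⟨hp1, hp2⟩
      · intro x hx
        by_cases h1 : x ≤ c
        · simpa [hG, h1] using hgca x ⟨hx.1, h1⟩
        · push_neg at h1
          have : x ∈ Metric.ball c r ∩ Ioc c b := by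
            refine ⟨?_, h1, hx.2.trans ht'b⟩
            rw [Metric.mem_ball, Real.dist_eq, abs_lt]
            have : x ≤ c + r / 2 := hx.2.trans (min_le_left _ _)
            constructor <;> linarith
          simpa [hG, h1.not_ge] using hball this
    exact absurd (le_csSup hbdd ht'S) (not_le.mpr hct')
  obtain ⟨-, g, hgv, hga⟩ := hcmem
  rw [hcb'] at hgv hga
  exact ⟨g, hgv, hga⟩

lemma evar_key {M : Type*} [MetricSpace M] {a b : ℝ} {g : ℝ → M}
    (hg : eVariationOn g (Set.Icc a b) ≠ ⊤) {s t : ℝ}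
    (has : a ≤ s) (hst : s ≤ t) (htb : t ≤ b) :
    dist (g s) (g t) ≤ (eVariationOn g (Set.Icc a b ∩ Set.Icc a t)).toReal
      - (eVariationOn g (Set.Icc a b ∩ Set.Icc a s)).toReal := by
  have hsum := eVariationOn.Icc_add_Icc g has hst (Set.mem_Icc.mpr ⟨has, hst.trans htb⟩)
  have hA : eVariationOn g (Set.Icc a b ∩ Set.Icc a s) ≠ ⊤ :=
    ne_top_of_le_ne_top hg (eVariationOn.mono g inter_subset_left)
  have hW : eVariationOn g (Set.Icc a b ∩ Set.Icc s t) ≠ ⊤ :=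
    ne_top_of_le_ne_top hg (eVariationOn.mono g inter_subset_left)
  have hedist : edist (g s) (g t) ≤ eVariationOn g (Set.Icc a b ∩ Set.Icc s t) :=
    eVariationOn.edist_le g ⟨⟨has, hst.trans htb⟩, le_refl s, hst⟩
      ⟨⟨has.trans hst, htb⟩, hst, le_refl t⟩
  have h1 : dist (g s) (g t) ≤ (eVariationOn g (Set.Icc a b ∩ Set.Icc s t)).toReal := by
    rw [dist_edist]
    exact ENNReal.toReal_mono hW hedist
  have h2 : (eVariationOn g (Set.Icc a b ∩ Set.Icc a t)).toReal
      = (eVariationOn g (Set.Icc a b ∩ Set.Icc a s)).toReal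
        + (eVariationOn g (Set.Icc a b ∩ Set.Icc s t)).toReal := by
    rw [← hsum, ENNReal.toReal_add hA hW]
  linarith

theorem regulated_iff_approxVar_lt_top {M : Type*} [MetricSpace M] [CompleteSpace M]
    {a b : ℝ} (hab : a < b) (f : ℝ → M) :
    ((∀ τ ∈ Set.Ioc a b, ∃ L : M, Tendsto f (𝓝[Set.Ico a τ] τ) (𝓝 L)) ∧
      (∀ τ ∈ Set.Ico a b, ∃ L : M, Tendsto f (𝓝[Set.Ioc τ b] τ) (𝓝 L))) ↔
    (∀ ε : ℝ, 0 < ε → approxVar f (Set.Icc a b) ε < ⊤) := by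
  constructor
  · rintro ⟨hl, hr⟩ ε hε
    obtain ⟨g, hgv, hga⟩ := regulated_exists_bv_approx hab f hl hr hε
    calc approxVar f (Set.Icc a b) ε ≤ eVariationOn g (Set.Icc a b) :=
          iInf_le_of_le g (iInf_le _ ⟨hgv, hga⟩)
      _ < ⊤ := hgv.lt_top
  · intro H
    constructor
    · intro τ hτ
      haveI : (𝓝[Ico a τ] τ).NeBot := by
        refine mem_closure_iff_nhdsWithin_neBot.mp ?_
        rw [closure_Ico hτ.1.ne]
        exact ⟨hτ.1.le, le_rfl⟩
      have hcauchy : Cauchy (map f (𝓝[Ico a τ] τ)) := by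
        rw [Metric.cauchy_iff]
        refine ⟨map_neBot, fun δ hδ => ?_⟩
        have h4 : (0 : ℝ) < δ / 4 := by linarith
        have hH := H (δ / 4) h4
        rw [approxVar] at hH
        simp only [iInf_lt_iff] at hH
        obtain ⟨g, ⟨hgv, hgd⟩, -⟩ := hH
        set v : ℝ → ℝ := fun s => (eVariationOn g (Icc a b ∩ Icc a s)).toReal with hv
        have hmono : ∀ ⦃s t : ℝ⦄, s ≤ t → v s ≤ v t := fun s t hst =>
          ENNReal.toReal_mono (ne_top_of_le_ne_top hgv (eVariationOn.mono g inter_subset_left))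
            (eVariationOn.mono g (inter_subset_inter_right _ (Icc_subset_Icc_right hst)))
        set SS := sSup (v '' Ico a τ) with hSS
        have hne : (v '' Ico a τ).Nonempty := ⟨v a, mem_image_of_mem v ⟨le_rfl, hτ.1⟩⟩
        have hbdd : BddAbove (v '' Ico a τ) :=
          ⟨v b, by rintro - ⟨x, hx, rfl⟩; exact hmono (hx.2.le.trans hτ.2)⟩
        obtain ⟨-, ⟨s0, hs0, rfl⟩, hs0v⟩ :=
          exists_lt_of_lt_csSup hne (show SS - δ / 4 < SS by linarith)
        refine ⟨f '' (Ico a τ ∩ Ioi s0), ?_, ?_⟩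
        · exact image_mem_map (inter_mem_nhdsWithin _ (Ioi_mem_nhds hs0.2))
        · have key : ∀ p q : ℝ, p ∈ Ico a τ ∩ Ioi s0 → q ∈ Ico a τ ∩ Ioi s0 → p ≤ q →
              dist (f p) (f q) < δ := by
            intro p q hp hq hpq
            have hpI : p ∈ Icc a b := ⟨hp.1.1, hp.1.2.le.trans hτ.2⟩
            have hqI : q ∈ Icc a b := ⟨hq.1.1, hq.1.2.le.trans hτ.2⟩
            have h1 : dist (g p) (g q) ≤ v q - v p := evar_key hgv hpI.1 hpq hqI.2
            have h2 : v q ≤ SS := le_csSup hbdd (mem_image_of_mem v hq.1)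
            have h3 : v s0 ≤ v p := hmono (le_of_lt hp.2)
            have d1 := hgd p hpI
            have d2 := hgd q hqI
            have := dist_triangle4 (f p) (g p) (g q) (f q)
            have := dist_comm (g q) (f q)
            linarith [dist_comm (g q) (f q)]
          rintro - ⟨x, hx, rfl⟩ - ⟨y, hy, rfl⟩
          rcases le_total x y with h | h
          · exact key x y hx hy h
          · rw [dist_comm]; exact key y x hy hx h
      obtain ⟨L, hL⟩ := CompleteSpace.complete hcauchy
      exact ⟨L, hL⟩
    · intro τ hτ
      haveI : (𝓝[Ioc τ b] τ).NeBot := by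
        refine mem_closure_iff_nhdsWithin_neBot.mp ?_
        rw [closure_Ioc hτ.2.ne]
        exact ⟨le_rfl, hτ.2.le⟩
      have hcauchy : Cauchy (map f (𝓝[Ioc τ b] τ)) := by
        rw [Metric.cauchy_iff]
        refine ⟨map_neBot, fun δ hδ => ?_⟩
        have h4 : (0 : ℝ) < δ / 4 := by linarith
        have hH := H (δ / 4) h4
        rw [approxVar] at hH
        simp only [iInf_lt_iff] at hH
        obtain ⟨g, ⟨hgv, hgd⟩, -⟩ := hH
        set v : ℝ → ℝ := fun s => (eVariationOn g (Icc a b ∩ Icc a s)).toReal with hv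
        have hmono : ∀ ⦃s t : ℝ⦄, s ≤ t → v s ≤ v t := fun s t hst =>
          ENNReal.toReal_mono (ne_top_of_le_ne_top hgv (eVariationOn.mono g inter_subset_left))
            (eVariationOn.mono g (inter_subset_inter_right _ (Icc_subset_Icc_right hst)))
        set II := sInf (v '' Ioc τ b) with hII
        have hne : (v '' Ioc τ b).Nonempty := ⟨v b, mem_image_of_mem v ⟨hτ.2, le_rfl⟩⟩
        have hbdd : BddBelow (v '' Ioc τ b) :=
          ⟨0, by rintro - ⟨x, hx, rfl⟩; exact ENNReal.toReal_nonneg⟩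
        obtain ⟨-, ⟨s0, hs0, rfl⟩, hs0v⟩ :=
          exists_lt_of_csInf_lt hne (show II < II + δ / 4 by linarith)
        refine ⟨f '' (Ioc τ b ∩ Iio s0), ?_, ?_⟩
        · exact image_mem_map (inter_mem_nhdsWithin _ (Iio_mem_nhds hs0.1))
        · have key : ∀ p q : ℝ, p ∈ Ioc τ b ∩ Iio s0 → q ∈ Ioc τ b ∩ Iio s0 → p ≤ q →
              dist (f p) (f q) < δ := by
            intro p q hp hq hpq
            have hpI : p ∈ Icc a b := ⟨hτ.1.trans hp.1.1.le, hp.1.2⟩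
            have hqI : q ∈ Icc a b := ⟨hτ.1.trans hq.1.1.le, hq.1.2⟩
            have h1 : dist (g p) (g q) ≤ v q - v p := evar_key hgv hpI.1 hpq hqI.2
            have h2 : v q ≤ v s0 := hmono hq.2.le
            have h3 : II ≤ v p := csInf_le hbdd (mem_image_of_mem v hp.1)
            have d1 := hgd p hpI
            have d2 := hgd q hqI
            have := dist_triangle4 (f p) (g p) (g q) (f q)
            linarith [dist_comm (g q) (f q)]
          rintro - ⟨x, hx, rfl⟩ - ⟨y, hy, rfl⟩
          rcases le_total x y with h | h
          · exact key x y hx hy h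
          · rw [dist_comm]; exact key y x hy hx h
      obtain ⟨L, hL⟩ := CompleteSpace.complete hcauchy
      exact ⟨L, hL⟩
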